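/- Let a > 1, δ > 0 and b ≥ 0. Then the system ẋ = y - δ(x³/3 + b·x), ẏ = -(x - sgn(x) - a) has no nonconstant periodic solution; that is, every solution (x, y) that is periodic of some period T > 0 is constant. -/

import Mathlib

open Set Filter Topology

/-- Antitonicity from a nonpositive derivative off a finite exceptional set. -/
lemma aux_anti_finite (f : ℝ → ℝ) (hf : Continuous f) (S : Finset ℝ) :
    ∀ p q : ℝ, p ≤ q →
      (∀ t ∈ Set.Ioo p q, t ∉ S → ∃ d, d ≤ 0 ∧ HasDerivAt f d t) → f q ≤ f p := by
  classical
  induction S using Finset.induction_on with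
  | empty =>
    intro p q hpq h
    have hanti : AntitoneOn f (Set.Icc p q) := by
      apply antitoneOn_of_deriv_nonpos (convex_Icc p q) hf.continuousOn
      · intro t ht
        rw [interior_Icc] at ht
        obtain ⟨d, _, hd⟩ := h t ht (by simp)
        exact hd.differentiableAt.differentiableWithinAt
      · intro t ht
        rw [interior_Icc] at ht
        obtain ⟨d, hd0, hd⟩ := h t ht (by simp)
        rw [hd.deriv]; exact hd0
    exact hanti (Set.left_mem_Icc.mpr hpq) (Set.right_mem_Icc.mpr hpq) hpq
  | @insert a S ha IH =>
    intro p q hpq h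
    by_cases haio : a ∈ Set.Ioo p q
    · have h1 : f a ≤ f p := by
        apply IH p a haio.1.le
        intro t ht hts
        refine h t ⟨ht.1, ht.2.trans haio.2⟩ ?_
        simp only [Finset.mem_insert, not_or]
        exact ⟨ne_of_lt ht.2, hts⟩
      have h2 : f q ≤ f a := by
        apply IH a q haio.2.le
        intro t ht hts
        refine h t ⟨haio.1.trans ht.1, ht.2⟩ ?_
        simp only [Finset.mem_insert, not_or]
        exact ⟨(ne_of_gt ht.1), hts⟩
      linarith
    · apply IH p q hpq
      intro t ht hts
      refine h t ht ?_
      simp only [Finset.mem_insert, not_or]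
      exact ⟨fun hta => haio (hta ▸ ht), hts⟩

/-- For `a > 1`, `δ > 0`, `b ≥ 0`, the system `ẋ = y - δ(x³/3 + bx)`,
`ẏ = -(x - sgn x - a)` has no nonconstant periodic solution. -/
theorem no_closed_orbit_of_nonneg_b (a b δ : ℝ) (ha : 1 < a) (hδ : 0 < δ) (hb : 0 ≤ b)
    (x y : ℝ → ℝ) (hxc : Continuous x) (hyc : Continuous y)
    (hx : ∀ t : ℝ, HasDerivAt x (y t - δ * ((x t) ^ 3 / 3 + b * x t)) t)
    (hy : ∀ t : ℝ, x t ≠ 0 → HasDerivAt y (-(x t - Real.sign (x t) - a)) t)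
    (T : ℝ) (hT : 0 < T)
    (hper : ∀ t : ℝ, x (t + T) = x t ∧ y (t + T) = y t) :
    ∃ cx cy : ℝ, ∀ t : ℝ, x t = cx ∧ y t = cy := by
  classical
  -- `u` is the derivative of `x`
  set u : ℝ → ℝ := fun t => y t - δ * ((x t) ^ 3 / 3 + b * x t) with hu_def
  -- the "energy" function
  set E : ℝ → ℝ := fun t => (u t) ^ 2 / 2 + ((x t) ^ 2 / 2 - |x t| - a * x t) with hE_def
  have hu : ∀ t, HasDerivAt x (u t) t := fun t => hx t
  have hucont : Continuous u := by
    apply hyc.sub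
    exact continuous_const.mul (((hxc.pow 3).div_const 3).add (continuous_const.mul hxc))
  have hEcont : Continuous E := by
    apply ((hucont.pow 2).div_const 2).add
    exact (((hxc.pow 2).div_const 2).sub hxc.abs).sub (continuous_const.mul hxc)
  -- derivative of E off the zero set of x
  have hE' : ∀ t, x t ≠ 0 →
      HasDerivAt E (-(δ * ((x t) ^ 2 + b)) * (u t) ^ 2) t := by
    intro t hne
    have hF : HasDerivAt (fun s => δ * ((x s) ^ 3 / 3 + b * x s))
        (δ * (((3 : ℕ) * (x t) ^ 2 * u t) / 3 + b * u t)) t := by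
      exact ((((hu t).pow 3).div_const 3).add ((hu t).const_mul b)).const_mul δ
    have hu' : HasDerivAt u
        (-(x t - Real.sign (x t) - a) - δ * (((3 : ℕ) * (x t) ^ 2 * u t) / 3 + b * u t)) t :=
      (hy t hne).sub hF
    have habs : HasDerivAt (fun s => |x s|) (Real.sign (x t) * u t) t := by
      rcases lt_or_gt_of_ne hne with hneg | hpos
      · have hev : ∀ᶠ s in 𝓝 t, x s < 0 :=
          hxc.continuousAt.eventually_lt continuousAt_const hneg
        have : HasDerivAt (fun s => -(x s)) (-(u t)) t := (hu t).neg
        have h2 : HasDerivAt (fun s => |x s|) (-(u t)) t := by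
          apply this.congr_of_eventuallyEq
          filter_upwards [hev] with s hs
          exact abs_of_neg hs
        rw [Real.sign_of_neg hneg]
        convert h2 using 1; ring
      · have hev : ∀ᶠ s in 𝓝 t, 0 < x s :=
          continuousAt_const.eventually_lt hxc.continuousAt hpos
        have h2 : HasDerivAt (fun s => |x s|) (u t) t := by
          apply (hu t).congr_of_eventuallyEq
          filter_upwards [hev] with s hs
          exact abs_of_pos hs
        rw [Real.sign_of_pos hpos]
        convert h2 using 1; ring
    have hG : HasDerivAt (fun s => (x s) ^ 2 / 2 - |x s| - a * x s)
        (((2 : ℕ) * (x t) ^ 1 * u t) / 2 - Real.sign (x t) * u t - a * u t) t :=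
      ((((hu t).pow 2).div_const 2).sub habs).sub ((hu t).const_mul a)
    have husq : HasDerivAt (fun s => (u s) ^ 2 / 2)
        (((2 : ℕ) * (u t) ^ 1 *
          (-(x t - Real.sign (x t) - a) -
            δ * (((3 : ℕ) * (x t) ^ 2 * u t) / 3 + b * u t))) / 2) t :=
      (hu'.pow 2).div_const 2
    have hsum := husq.add hG
    have : HasDerivAt E
        (((2 : ℕ) * (u t) ^ 1 *
          (-(x t - Real.sign (x t) - a) -
            δ * (((3 : ℕ) * (x t) ^ 2 * u t) / 3 + b * u t))) / 2 +
         (((2 : ℕ) * (x t) ^ 1 * u t) / 2 - Real.sign (x t) * u t - a * u t)) t := by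
      rw [hE_def]; exact hsum
    convert this using 1
    push_cast
    ring
  -- periodicity of u and E
  have huper : ∀ t, u (t + T) = u t := by
    intro t
    simp only [hu_def, (hper t).1, (hper t).2]
  have hEper : ∀ t, E (t + T) = E t := by
    intro t
    simp only [hE_def, huper t, (hper t).1]
  -- if x t = 0 and u t ≠ 0 then x ≠ 0 on a punctured neighborhood
  have hiso : ∀ t, x t = 0 → u t ≠ 0 → ∀ᶠ s in 𝓝[≠] t, x s ≠ 0 := by
    intro t hxt hut
    have := (hu t).eventually_ne (c := x t) hut
    filter_upwards [this] with s hs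
    rw [hxt] at hs
    exact hs
  -- key step: E is antitone on intervals whose interior avoids C = {x = 0 ∧ u = 0}
  have hstep : ∀ w v : ℝ, w ≤ v →
      (∀ s ∈ Set.Ioo w v, ¬(x s = 0 ∧ u s = 0)) → E v ≤ E w := by
    intro w v hwv hC
    rcases eq_or_lt_of_le hwv with rfl | hlt
    · exact le_rfl
    -- inner estimate on compact subintervals
    have inner : ∀ w' v' : ℝ, w < w' → w' ≤ v' → v' < v → E v' ≤ E w' := by
      intro w' v' hw' hwv' hv'
      -- the zero set of x in [w', v'] is finite
      have hfin : (Set.Icc w' v' ∩ {t | x t = 0}).Finite := by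
        by_contra hinf
        obtain ⟨z, hzK, hz⟩ :=
          Set.Infinite.exists_accPt_of_subset_isCompact hinf isCompact_Icc
            Set.inter_subset_left
        have hxz : x z = 0 := by
          have hzc : z ∈ closure (Set.Icc w' v' ∩ {t | x t = 0}) := by
            apply mem_closure_iff_clusterPt.mpr
            exact hz.clusterPt
          have hcl : IsClosed {t : ℝ | x t = 0} := isClosed_eq hxc continuous_const
          have := (hcl.closure_subset_iff.mpr Set.inter_subset_right) hzc
          exact this
        have hzio : z ∈ Set.Ioo w v :=
          ⟨hw'.trans_le hzK.1, lt_of_le_of_lt hzK.2 hv'⟩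
        have huz : u z ≠ 0 := fun h0 => hC z hzio ⟨hxz, h0⟩
        have hev := hiso z hxz huz
        have hfreq : ∃ᶠ s in 𝓝 z, s ≠ z ∧ s ∈ Set.Icc w' v' ∩ {t | x t = 0} :=
          accPt_iff_frequently.mp hz
        have hfreq' : ∃ᶠ s in 𝓝[≠] z, s ∈ Set.Icc w' v' ∩ {t | x t = 0} := by
          rw [nhdsWithin, frequently_inf_principal]
          apply hfreq.mono
          intro s hs
          exact ⟨by simpa using hs.1, hs.2⟩
        obtain ⟨s, hs1, hs2⟩ := (hfreq'.and_eventually hev).exists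
        exact hs2 hs1.2
      -- apply the finite-exception antitonicity lemma
      apply aux_anti_finite E hEcont hfin.toFinset w' v' hwv'
      intro t ht hts
      have hxt : x t ≠ 0 := by
        intro h0
        exact hts (hfin.mem_toFinset.mpr ⟨⟨ht.1.le, ht.2.le⟩, h0⟩)
      refine ⟨-(δ * ((x t) ^ 2 + b)) * (u t) ^ 2, ?_, hE' t hxt⟩
      have h1 : 0 ≤ (x t) ^ 2 + b := by positivity
      have h2 : 0 ≤ δ * ((x t) ^ 2 + b) * (u t) ^ 2 :=
        mul_nonneg (mul_nonneg hδ.le h1) (sq_nonneg _)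
      nlinarith
    -- pass to the limit at the endpoints
    have step2 : ∀ w' ∈ Set.Ioo w v, E v ≤ E w' := by
      intro w' hw'
      have h1 : Tendsto E (𝓝[<] v) (𝓝 (E v)) :=
        (hEcont.tendsto v).mono_left nhdsWithin_le_nhds
      have h2 : ∀ᶠ s in 𝓝[<] v, E s ≤ E w' := by
        have hmem : Set.Ioo w' v ∈ 𝓝[<] v := Ioo_mem_nhdsLT hw'.2
        filter_upwards [hmem] with s hs
        exact inner w' s hw'.1 hs.1.le hs.2
      exact le_of_tendsto h1 h2
    have h1 : Tendsto E (𝓝[>] w) (𝓝 (E w)) :=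
      (hEcont.tendsto w).mono_left nhdsWithin_le_nhds
    have h2 : ∀ᶠ s in 𝓝[>] w, E v ≤ E s := by
      have hmem : Set.Ioo w v ∈ 𝓝[>] w := Ioo_mem_nhdsGT hlt
      filter_upwards [hmem] with s hs
      exact step2 s hs
    exact ge_of_tendsto h1 h2
  -- E is antitone
  have hanti : Antitone E := by
    intro w v hwv
    by_cases hCint : ∀ s ∈ Set.Ioo w v, ¬(x s = 0 ∧ u s = 0)
    · exact hstep w v hwv hCint
    · push_neg at hCint
      obtain ⟨c, hcio, hcx, hcu⟩ := hCint
      set K : Set ℝ := Set.Icc w v ∩ {t | x t = 0 ∧ u t = 0} with hK_def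
      have hKcl : IsClosed K :=
        isClosed_Icc.inter ((isClosed_eq hxc continuous_const).inter
          (isClosed_eq hucont continuous_const))
      have hKcpt : IsCompact K := isCompact_Icc.of_isClosed_subset hKcl Set.inter_subset_left
      have hKne : K.Nonempty := ⟨c, ⟨hcio.1.le, hcio.2.le⟩, hcx, hcu⟩
      have hc1 := hKcpt.sInf_mem hKne
      have hc2 := hKcpt.sSup_mem hKne
      set c₁ := sInf K
      set c₂ := sSup K
      have hE1 : E c₁ = 0 := by
        simp [hE_def, hc1.2.1, hc1.2.2]
      have hE2 : E c₂ = 0 := by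
        simp [hE_def, hc2.2.1, hc2.2.2]
      have hle1 : E c₁ ≤ E w := by
        apply hstep w c₁ hc1.1.1
        intro s hs ⟨hsx, hsu⟩
        have hsK : s ∈ K := ⟨⟨hs.1.le, hs.2.le.trans hc1.1.2⟩, hsx, hsu⟩
        exact absurd (csInf_le hKcpt.bddBelow hsK) (not_le.mpr hs.2)
      have hle2 : E v ≤ E c₂ := by
        apply hstep c₂ v hc2.1.2
        intro s hs ⟨hsx, hsu⟩
        have hsK : s ∈ K := ⟨⟨hc2.1.1.trans hs.1.le, hs.2.le⟩, hsx, hsu⟩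
        exact absurd (le_csSup hKcpt.bddAbove hsK) (not_le.mpr hs.1)
      linarith
  -- E is constant
  have hEconst : ∀ t, E t = E 0 := by
    have key : ∀ s t : ℝ, s ≤ t → E s = E t := by
      intro s t hst
      have h1 : E t ≤ E s := hanti hst
      obtain ⟨n, hn⟩ := exists_nat_gt ((t - s) / T)
      have hlt : t ≤ s + n * T := by
        have := (div_lt_iff₀ hT).mp hn
        linarith
      have hpern : ∀ m : ℕ, E (s + m * T) = E s := by
        intro m
        induction m with
        | zero => simp
        | succ k ih =>
          have : s + (k + 1 : ℕ) * T = (s + k * T) + T := by push_cast; ring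
          rw [this, hEper, ih]
      have h2 : E s ≤ E t := by
        calc E s = E (s + n * T) := (hpern n).symm
        _ ≤ E t := hanti hlt
      linarith
    intro t
    rcases le_total t 0 with h | h
    · exact key t 0 h
    · exact (key 0 t h).symm
  -- u vanishes wherever x ≠ 0
  have huzero : ∀ t, x t ≠ 0 → u t = 0 := by
    intro t hne
    have hconst : HasDerivAt E 0 t := by
      apply (hasDerivAt_const t (E 0)).congr_of_eventuallyEq
      exact Eventually.of_forall fun s => hEconst s
    have heq := (hE' t hne).unique hconst
    have h2 : (x t) ^ 2 ≠ 0 := pow_ne_zero 2 hne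
    have h3 : 0 < (x t) ^ 2 := lt_of_le_of_ne (sq_nonneg _) (Ne.symm h2)
    have h4 : 0 < δ * ((x t) ^ 2 + b) := mul_pos hδ (by linarith)
    have h5 : (u t) ^ 2 = 0 := by
      by_contra h
      have h6 : 0 < (u t) ^ 2 := lt_of_le_of_ne (sq_nonneg _) (Ne.symm h)
      nlinarith
    exact (pow_eq_zero_iff two_ne_zero).mp h5
  -- u vanishes everywhere
  have hu0 : ∀ t, u t = 0 := by
    intro t
    by_cases hne : x t ≠ 0
    · exact huzero t hne
    · push_neg at hne
      by_contra hut
      have hev := hiso t hne hut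
      have hev2 : ∀ᶠ s in 𝓝[≠] t, u s = 0 := by
        filter_upwards [hev] with s hs
        exact huzero s hs
      have htend : Tendsto u (𝓝[≠] t) (𝓝 (u t)) :=
        (hucont.tendsto t).mono_left nhdsWithin_le_nhds
      have htend2 : Tendsto u (𝓝[≠] t) (𝓝 0) :=
        Tendsto.congr' (by filter_upwards [hev2] with s hs; exact hs.symm) tendsto_const_nhds
      exact hut (tendsto_nhds_unique htend htend2)
  -- x is constant
  have hxd : ∀ t, HasDerivAt x 0 t := fun t => hu0 t ▸ hu t
  have hxconst : ∀ t, x t = x 0 := by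
    intro t
    exact is_const_of_deriv_eq_zero (fun s => (hxd s).differentiableAt)
      (fun s => (hxd s).deriv) t 0
  refine ⟨x 0, y 0, fun t => ⟨hxconst t, ?_⟩⟩
  have h1 : y t = δ * ((x t) ^ 3 / 3 + b * x t) := by
    have := hu0 t
    rw [hu_def] at this
    simpa [sub_eq_zero] using this
  have h2 : y 0 = δ * ((x 0) ^ 3 / 3 + b * x 0) := by
    have := hu0 0
    rw [hu_def] at this
    simpa [sub_eq_zero] using this
  rw [h1, h2, hxconst t]
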